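/- Let H be a Hermitian D×D matrix and H' a Hermitian D'×D' matrix over ℂ, let p, q ∈ ℕ with r = p + q ≥ 1, and let P, Q be orthogonal projectors on ℂ^r with PQ = 0, P + Q = 1, rank(P) = p and rank(Q) = q. Suppose Δ, ε ≥ 0 and Ṽ : ℂ^D ⊗ ℂ^r → ℂ^{D'} is an isometry whose range equals S_{≤Δ}(H'), and that ‖H'|_{≤Δ} − Ṽ(H⊗P + H̄⊗Q)Ṽ†‖ ≤ ε, where H̄ denotes the entrywise complex conjugate of H and ‖·‖ is the operator norm. List the eigenvalues of H in nondecreasing order λ₁(H) ≤ … ≤ λ_D(H) and those of H' in nondecreasing order λ₁(H') ≤ … ≤ λ_{D'}(H'), with multiplicity. Then for every i with 1 ≤ i ≤ D and every j with (i−1)r < j ≤ ir, one has |λ_i(H) − λ_j(H')| ≤ ε. -/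

import Mathlib

open Matrix Kronecker

/-- The operator norm (ℓ²→ℓ² norm) of a complex matrix. -/
noncomputable def opNorm {m n : Type*} [Fintype m] [Fintype n] [DecidableEq n]
    (M : Matrix m n ℂ) : ℝ :=
  ‖LinearMap.toContinuousLinearMap (Matrix.toEuclideanLin M)‖

/-- `S_{≤Δ}(M)`: the span of eigenvectors of `M` with (real) eigenvalue at most `Δ`. -/
noncomputable def lowEnergy {D : Type*} [Fintype D] [DecidableEq D]
    (M : Matrix D D ℂ) (Δ : ℝ) : Submodule ℂ (EuclideanSpace ℂ D) :=
  ⨆ (μ : ℝ) (_ : μ ≤ Δ), Module.End.eigenspace (Matrix.toEuclideanLin M) (μ : ℂ)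

/-- The eigenvalues of a Hermitian matrix listed in nondecreasing order (with
multiplicity); `sortedEigs hM` is the list `λ₁ ≤ λ₂ ≤ …`, 0-indexed. -/
noncomputable def sortedEigs {D : ℕ} {M : Matrix (Fin D) (Fin D) ℂ}
    (hM : M.IsHermitian) : List ℝ :=
  (Finset.univ.val.map hM.eigenvalues).sort (· ≤ ·)

local notation "⟪" x ", " y "⟫" => @inner ℂ _ _ x y

lemma withLp_equiv_toLp_two {V : Type*} (x : V) :
    WithLp.equiv 2 V (WithLp.toLp 2 x) = x := rfl

section SpanForm

variable {E : Type*} [NormedAddCommGroup E] [InnerProductSpace ℂ E]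

lemma inner_eq_zero_of_mem_span {ι : Type*} {v : ι → E} (hv : Orthonormal ℂ v)
    (s : Set ι) {x : E} (hx : x ∈ Submodule.span ℂ (v '' s)) {j : ι} (hj : j ∉ s) :
    ⟪v j, x⟫ = 0 := by
  induction hx using Submodule.span_induction with
  | mem y hy =>
    obtain ⟨k, hk, rfl⟩ := hy
    have hjk : j ≠ k := fun h => hj (h ▸ hk)
    simpa using hv.2 hjk
  | zero => simp
  | add y z _ _ hy hz => rw [inner_add_right, hy, hz, add_zero]
  | smul a y _ hy => rw [inner_smul_right, hy, mul_zero]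

lemma inner_map_eq_sum {ι : Type*} [Fintype ι] (v : OrthonormalBasis ι ℂ E)
    (T : E →ₗ[ℂ] E) (g : ι → ℝ) (hT : ∀ j, T (v j) = (g j : ℂ) • v j) (x : E) :
    ⟪x, T x⟫ = ∑ j, ((g j : ℂ) * ((starRingEnd ℂ) (v.repr x j) * v.repr x j)) := by
  have hTx : T x = ∑ j, ((g j : ℂ) * v.repr x j) • v j := by
    conv_lhs => rw [← v.sum_repr x]
    rw [map_sum]
    refine Finset.sum_congr rfl fun j _ => ?_
    rw [LinearMap.map_smul, hT j, smul_smul, mul_comm]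
  rw [hTx, inner_sum]
  refine Finset.sum_congr rfl fun j _ => ?_
  rw [inner_smul_right, ← inner_conj_symm, v.repr_apply_apply]
  ring

/-- real part of the quadratic form expansion. -/
lemma re_inner_map_eq_sum {ι : Type*} [Fintype ι] (v : OrthonormalBasis ι ℂ E)
    (T : E →ₗ[ℂ] E) (g : ι → ℝ) (hT : ∀ j, T (v j) = (g j : ℂ) • v j) (x : E) :
    RCLike.re ⟪x, T x⟫ = ∑ j, g j * ‖v.repr x j‖ ^ 2 := by
  rw [inner_map_eq_sum v T g hT x, map_sum]
  refine Finset.sum_congr rfl fun j _ => ?_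
  rw [RCLike.conj_mul]
  simp [← Complex.ofReal_pow]

lemma norm_sq_eq_sum_repr {ι : Type*} [Fintype ι] (v : OrthonormalBasis ι ℂ E)
    (x : E) : ‖x‖ ^ 2 = ∑ j, ‖v.repr x j‖ ^ 2 := by
  have := re_inner_map_eq_sum v (LinearMap.id) (fun _ => 1) (by simp) x
  simpa [inner_self_eq_norm_sq, ← Complex.ofReal_pow, Complex.ofReal_re] using this

lemma form_ge_of_mem_span {ι : Type*} [Fintype ι] (v : OrthonormalBasis ι ℂ E)
    (T : E →ₗ[ℂ] E) (g : ι → ℝ) (hT : ∀ j, T (v j) = (g j : ℂ) • v j)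
    (s : Finset ι) (t : ℝ) (hg : ∀ j ∈ s, t ≤ g j)
    {x : E} (hx : x ∈ Submodule.span ℂ (⇑v '' ↑s)) :
    t * ‖x‖ ^ 2 ≤ RCLike.re ⟪x, T x⟫ := by
  rw [re_inner_map_eq_sum v T g hT x, norm_sq_eq_sum_repr v x, Finset.mul_sum]
  refine Finset.sum_le_sum fun j _ => ?_
  by_cases hj : j ∈ s
  · exact mul_le_mul_of_nonneg_right (hg j hj) (by positivity)
  · have h0 : v.repr x j = 0 := by
      rw [v.repr_apply_apply]
      exact inner_eq_zero_of_mem_span v.orthonormal _ hx hj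
    simp [h0]

lemma form_le_of_mem_span {ι : Type*} [Fintype ι] (v : OrthonormalBasis ι ℂ E)
    (T : E →ₗ[ℂ] E) (g : ι → ℝ) (hT : ∀ j, T (v j) = (g j : ℂ) • v j)
    (s : Finset ι) (t : ℝ) (hg : ∀ j ∈ s, g j ≤ t)
    {x : E} (hx : x ∈ Submodule.span ℂ (⇑v '' ↑s)) :
    RCLike.re ⟪x, T x⟫ ≤ t * ‖x‖ ^ 2 := by
  have := form_ge_of_mem_span v (-T) (fun j => -(g j))
    (by intro j; rw [LinearMap.neg_apply, hT j]; push_cast; rw [neg_smul]) s (-t)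
    (fun j hj => neg_le_neg (hg j hj)) hx
  rw [LinearMap.neg_apply, inner_neg_right, map_neg] at this
  linarith

lemma finrank_span_orthonormal {ι : Type*} {v : ι → E} (hv : Orthonormal ℂ v)
    (s : Finset ι) :
    Module.finrank ℂ (Submodule.span ℂ (v '' ↑s)) = s.card := by
  have h1 : LinearIndependent ℂ (fun j : {j // j ∈ s} => v j) :=
    hv.linearIndependent.comp _ Subtype.val_injective
  have h2 := finrank_span_eq_card h1
  rw [show Set.range (fun j : {j // j ∈ s} => v j) = v '' ↑s by
    rw [show (fun j : {j // j ∈ s} => v j) = v ∘ Subtype.val from rfl, Set.range_comp,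
      Subtype.range_coe]] at h2
  rw [h2, Fintype.card_coe]

end SpanForm

section Sorted

variable {N : ℕ} {M : Matrix (Fin N) (Fin N) ℂ} (hM : M.IsHermitian)

lemma sortedEigs_eq_ofFn :
    sortedEigs hM = List.ofFn (hM.eigenvalues ∘ Tuple.sort hM.eigenvalues) := by
  refine (fun h1 h2 h3 => List.Perm.eq_of_pairwise' (r := (· ≤ ·)) h2 h3 h1) ?_ ?_ ?_
  · rw [← Multiset.coe_eq_coe]
    unfold sortedEigs
    rw [Multiset.sort_eq, List.ofFn_eq_map, ← Multiset.map_coe]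
    have h1 : ((List.finRange N : List (Fin N)) : Multiset (Fin N)) =
        (Finset.univ : Finset (Fin N)).val := rfl
    rw [h1, ← Multiset.map_map]
    congr 1
    calc (Finset.univ : Finset (Fin N)).val
        = (Finset.univ.map (Tuple.sort hM.eigenvalues).toEmbedding).val := by
          rw [Finset.map_univ_equiv]
      _ = Multiset.map (⇑(Tuple.sort hM.eigenvalues)) Finset.univ.val := Finset.map_val _ _
  · exact Multiset.pairwise_sort _ _
  · rw [← List.sortedLE_iff_pairwise, List.sortedLE_ofFn_iff]
    exact Tuple.monotone_sort _

lemma sortedEigs_getD (k : ℕ) (hk : k < N) :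
    (sortedEigs hM).getD k 0 = hM.eigenvalues (Tuple.sort hM.eigenvalues ⟨k, hk⟩) := by
  have hlen : (sortedEigs hM).length = N := by
    rw [sortedEigs_eq_ofFn]; simp
  rw [sortedEigs_eq_ofFn, List.getD_eq_getElem _ _ (by simpa using hk)]
  simp

lemma exists_ne_zero_mem_inf {E : Type*} [NormedAddCommGroup E] [InnerProductSpace ℂ E]
    [FiniteDimensional ℂ E] (W U : Submodule ℂ E)
    (h : Module.finrank ℂ E < Module.finrank ℂ W + Module.finrank ℂ U) :
    ∃ x ∈ W ⊓ U, x ≠ 0 := by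
  have h2 := Submodule.finrank_sup_add_finrank_inf_eq W U
  have h3 : Module.finrank ℂ ↥(W ⊔ U) ≤ Module.finrank ℂ E := Submodule.finrank_le _
  have h4 : 0 < Module.finrank ℂ ↥(W ⊓ U) := by omega
  rw [Module.finrank_pos_iff] at h4
  obtain ⟨⟨x, hx⟩, hne⟩ := exists_ne (0 : ↥(W ⊓ U))
  exact ⟨x, hx, fun h ↦ hne (Subtype.ext h)⟩

lemma toEuclideanLin_eigenvectorBasis (j : Fin N) :
    Matrix.toEuclideanLin M (hM.eigenvectorBasis j)
      = (hM.eigenvalues j : ℂ) • hM.eigenvectorBasis j := by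
  apply (WithLp.equiv 2 (Fin N → ℂ)).injective
  have h := hM.mulVec_eigenvectorBasis j
  rw [Matrix.toEuclideanLin_apply, withLp_equiv_toLp_two, h]
  ext i
  simp [Complex.real_smul]

lemma eigenvectorBasis_sorted (σ : Equiv.Perm (Fin N)) (k : Fin N) :
    (hM.eigenvectorBasis.reindex σ.symm) k = hM.eigenvectorBasis (σ k) := by
  simp [OrthonormalBasis.reindex_apply]

/-- Courant–Fischer upper bound. -/
lemma smallEig_le_of_subspace (k : Fin N) (t : ℝ)
    (W : Submodule ℂ (EuclideanSpace ℂ (Fin N)))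
    (hdim : (k : ℕ) + 1 ≤ Module.finrank ℂ W)
    (hW : ∀ x ∈ W, RCLike.re ⟪x, Matrix.toEuclideanLin M x⟫ ≤ t * ‖x‖ ^ 2) :
    hM.eigenvalues (Tuple.sort hM.eigenvalues k) ≤ t := by
  classical
  set σ := Tuple.sort hM.eigenvalues with hσ
  set B : OrthonormalBasis (Fin N) ℂ (EuclideanSpace ℂ (Fin N)) :=
    hM.eigenvectorBasis.reindex σ.symm with hB
  have hBa : ∀ m, B m = hM.eigenvectorBasis (σ m) := eigenvectorBasis_sorted hM σ
  have hTB : ∀ m, Matrix.toEuclideanLin M (B m)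
      = ((hM.eigenvalues (σ m) : ℝ) : ℂ) • B m := by
    intro m; rw [hBa m]; exact toEuclideanLin_eigenvectorBasis hM (σ m)
  set U : Submodule ℂ (EuclideanSpace ℂ (Fin N)) :=
    Submodule.span ℂ (⇑B '' ↑(Finset.Ici k)) with hU
  have hUdim : Module.finrank ℂ U = N - (k : ℕ) := by
    rw [hU, finrank_span_orthonormal B.orthonormal, Fin.card_Ici]
  have hmono : Monotone (hM.eigenvalues ∘ σ) := Tuple.monotone_sort _
  obtain ⟨x, hx, hxne⟩ := exists_ne_zero_mem_inf W U (by
    rw [hUdim, finrank_euclideanSpace_fin]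
    have := k.isLt
    omega)
  obtain ⟨hxW, hxU⟩ := hx
  have h1 : hM.eigenvalues (σ k) * ‖x‖ ^ 2 ≤ RCLike.re ⟪x, Matrix.toEuclideanLin M x⟫ :=
    form_ge_of_mem_span B _ _ hTB (Finset.Ici k) _
      (fun m hm => hmono (Finset.mem_Ici.mp hm)) hxU
  have h2 := hW x hxW
  have hxpos : 0 < ‖x‖ ^ 2 := by
    have := norm_pos_iff.mpr hxne
    positivity
  nlinarith

/-- Courant–Fischer lower bound. -/
lemma le_smallEig_of_subspace (k : Fin N) (t : ℝ)
    (W : Submodule ℂ (EuclideanSpace ℂ (Fin N)))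
    (hdim : N - (k : ℕ) ≤ Module.finrank ℂ W)
    (hW : ∀ x ∈ W, t * ‖x‖ ^ 2 ≤ RCLike.re ⟪x, Matrix.toEuclideanLin M x⟫) :
    t ≤ hM.eigenvalues (Tuple.sort hM.eigenvalues k) := by
  classical
  set σ := Tuple.sort hM.eigenvalues with hσ
  set B : OrthonormalBasis (Fin N) ℂ (EuclideanSpace ℂ (Fin N)) :=
    hM.eigenvectorBasis.reindex σ.symm with hB
  have hBa : ∀ m, B m = hM.eigenvectorBasis (σ m) := eigenvectorBasis_sorted hM σ
  have hTB : ∀ m, Matrix.toEuclideanLin M (B m)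
      = ((hM.eigenvalues (σ m) : ℝ) : ℂ) • B m := by
    intro m; rw [hBa m]; exact toEuclideanLin_eigenvectorBasis hM (σ m)
  set U : Submodule ℂ (EuclideanSpace ℂ (Fin N)) :=
    Submodule.span ℂ (⇑B '' ↑(Finset.Iic k)) with hU
  have hUdim : Module.finrank ℂ U = (k : ℕ) + 1 := by
    rw [hU, finrank_span_orthonormal B.orthonormal, Fin.card_Iic]
  have hmono : Monotone (hM.eigenvalues ∘ σ) := Tuple.monotone_sort _
  obtain ⟨x, hx, hxne⟩ := exists_ne_zero_mem_inf W U (by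
    rw [hUdim, finrank_euclideanSpace_fin]
    have := k.isLt
    omega)
  obtain ⟨hxW, hxU⟩ := hx
  have h1 : RCLike.re ⟪x, Matrix.toEuclideanLin M x⟫ ≤ hM.eigenvalues (σ k) * ‖x‖ ^ 2 :=
    form_le_of_mem_span B _ _ hTB (Finset.Iic k) _
      (fun m hm => hmono (Finset.mem_Iic.mp hm)) hxU
  have h2 := hW x hxW
  have hxpos : 0 < ‖x‖ ^ 2 := by
    have := norm_pos_iff.mpr hxne
    positivity
  nlinarith

end Sorted

section Low

lemma mem_orthogonal_span_iff {E : Type*} [NormedAddCommGroup E] [InnerProductSpace ℂ E]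
    (S : Set E) (v : E) :
    v ∈ (Submodule.span ℂ S)ᗮ ↔ ∀ u ∈ S, ⟪u, v⟫ = 0 := by
  constructor
  · intro hv u hu
    exact hv u (Submodule.subset_span hu)
  · intro h u hu
    induction hu using Submodule.span_induction with
    | mem y hy => exact h y hy
    | zero => simp
    | add y z _ _ hy hz => rw [inner_add_left, hy, hz, add_zero]
    | smul a y _ hy => rw [inner_smul_left, hy, mul_zero]

variable {N : ℕ} {M : Matrix (Fin N) (Fin N) ℂ} (hM : M.IsHermitian) (Δ : ℝ)

noncomputable def lowSet : Finset (Fin N) :=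
  Finset.univ.filter (fun j => hM.eigenvalues j ≤ Δ)

lemma mem_lowSet_iff (j : Fin N) : j ∈ lowSet hM Δ ↔ hM.eigenvalues j ≤ Δ := by
  simp [lowSet]

lemma span_eigen_invariant (s : Finset (Fin N)) {x : EuclideanSpace ℂ (Fin N)}
    (hx : x ∈ Submodule.span ℂ (⇑hM.eigenvectorBasis '' ↑s)) :
    Matrix.toEuclideanLin M x ∈ Submodule.span ℂ (⇑hM.eigenvectorBasis '' ↑s) := by
  induction hx using Submodule.span_induction with
  | mem y hy =>
    obtain ⟨k, hk, rfl⟩ := hy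
    rw [toEuclideanLin_eigenvectorBasis hM k]
    exact Submodule.smul_mem _ _ (Submodule.subset_span ⟨k, hk, rfl⟩)
  | zero => simp
  | add y z _ _ hy hz => rw [map_add]; exact Submodule.add_mem _ hy hz
  | smul a y _ hy => rw [LinearMap.map_smul]; exact Submodule.smul_mem _ _ hy

lemma lowEnergy_eq_span :
    lowEnergy M Δ = Submodule.span ℂ (⇑hM.eigenvectorBasis '' ↑(lowSet hM Δ)) := by
  apply le_antisymm
  · apply iSup_le; intro μ; apply iSup_le; intro hμ
    intro v hv
    have hsym := (Matrix.isHermitian_iff_isSymmetric.mp hM)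
    have hTv : Matrix.toEuclideanLin M v = (μ : ℂ) • v :=
      Module.End.mem_eigenspace_iff.mp hv
    rw [← hM.eigenvectorBasis.sum_repr v]
    apply Submodule.sum_mem
    intro j _
    by_cases hj : hM.eigenvalues j ≤ Δ
    · exact Submodule.smul_mem _ _
        (Submodule.subset_span ⟨j, (mem_lowSet_iff hM Δ j).mpr hj, rfl⟩)
    · have h0 : hM.eigenvectorBasis.repr v j = 0 := by
        rw [OrthonormalBasis.repr_apply_apply]
        have h1 : ⟪Matrix.toEuclideanLin M (hM.eigenvectorBasis j), v⟫
            = ((hM.eigenvalues j : ℝ) : ℂ) * ⟪hM.eigenvectorBasis j, v⟫ := by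
          rw [toEuclideanLin_eigenvectorBasis hM j, inner_smul_left, Complex.conj_ofReal]
        have h2 : ⟪Matrix.toEuclideanLin M (hM.eigenvectorBasis j), v⟫
            = (μ : ℂ) * ⟪hM.eigenvectorBasis j, v⟫ := by
          rw [hsym (hM.eigenvectorBasis j) v, hTv, inner_smul_right]
        have h3 : (((hM.eigenvalues j : ℝ) : ℂ) - (μ : ℂ)) * ⟪hM.eigenvectorBasis j, v⟫
            = 0 := by rw [sub_mul, ← h1, ← h2, sub_self]
        rcases mul_eq_zero.mp h3 with h | h
        · exfalso
          have : (hM.eigenvalues j : ℂ) = (μ : ℂ) := by linear_combination h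
          rw [Complex.ofReal_inj] at this
          exact hj (this ▸ hμ)
        · exact h
      rw [h0, zero_smul]
      exact Submodule.zero_mem _
  · rw [Submodule.span_le]
    rintro _ ⟨j, hj, rfl⟩
    apply Submodule.mem_iSup_of_mem (hM.eigenvalues j)
    apply Submodule.mem_iSup_of_mem ((mem_lowSet_iff hM Δ j).mp hj)
    exact Module.End.mem_eigenspace_iff.mpr (toEuclideanLin_eigenvectorBasis hM j)

lemma lowSpan_orthogonal :
    (Submodule.span ℂ (⇑hM.eigenvectorBasis '' ↑(lowSet hM Δ)))ᗮ
      = Submodule.span ℂ (⇑hM.eigenvectorBasis '' ↑((lowSet hM Δ)ᶜ)) := by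
  have h1 : Submodule.span ℂ (⇑hM.eigenvectorBasis '' ↑((lowSet hM Δ)ᶜ))
      ≤ (Submodule.span ℂ (⇑hM.eigenvectorBasis '' ↑(lowSet hM Δ)))ᗮ := by
    rw [Submodule.span_le]
    rintro _ ⟨j, hj, rfl⟩
    rw [SetLike.mem_coe, mem_orthogonal_span_iff]
    rintro _ ⟨k, hk, rfl⟩
    have hkj : k ≠ j := by
      intro h; rw [Finset.mem_coe, Finset.mem_compl] at hj; exact hj (h ▸ hk)
    simpa using hM.eigenvectorBasis.orthonormal.2 hkj
  apply (Submodule.eq_of_le_of_finrank_eq h1 ?_).symm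
  have ha := Submodule.finrank_add_finrank_orthogonal
    (Submodule.span ℂ (⇑hM.eigenvectorBasis '' ↑(lowSet hM Δ)))
  rw [finrank_span_orthonormal hM.eigenvectorBasis.orthonormal,
    finrank_euclideanSpace_fin] at ha
  rw [finrank_span_orthonormal hM.eigenvectorBasis.orthonormal]
  have hc := Finset.card_compl (lowSet hM Δ)
  have hle : (lowSet hM Δ).card ≤ N := by
    simpa using Finset.card_le_card (Finset.subset_univ (lowSet hM Δ))
  rw [Fintype.card_fin] at hc
  omega

end Low

section Kron

variable {Dn rn : ℕ}

noncomputable def tensorVec (x : EuclideanSpace ℂ (Fin Dn)) (y : EuclideanSpace ℂ (Fin rn)) :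
    EuclideanSpace ℂ (Fin Dn × Fin rn) :=
  (WithLp.equiv 2 _).symm (fun dk => x dk.1 * y dk.2)

noncomputable def conjVec (x : EuclideanSpace ℂ (Fin Dn)) : EuclideanSpace ℂ (Fin Dn) :=
  (WithLp.equiv 2 _).symm (fun d => star (x d))

lemma tensorVec_apply (x : EuclideanSpace ℂ (Fin Dn)) (y : EuclideanSpace ℂ (Fin rn))
    (dk : Fin Dn × Fin rn) : tensorVec x y dk = x dk.1 * y dk.2 := rfl

lemma conjVec_apply (x : EuclideanSpace ℂ (Fin Dn)) (d : Fin Dn) :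
    conjVec x d = star (x d) := rfl

lemma inner_tensorVec (x x' : EuclideanSpace ℂ (Fin Dn)) (y y' : EuclideanSpace ℂ (Fin rn)) :
    ⟪tensorVec x y, tensorVec x' y'⟫ = ⟪x, x'⟫ * ⟪y, y'⟫ := by
  simp only [PiLp.inner_apply, RCLike.inner_apply, tensorVec_apply]
  rw [Finset.sum_mul_sum, Fintype.sum_prod_type]
  refine Finset.sum_congr rfl fun d _ => Finset.sum_congr rfl fun k _ => ?_
  simp only [_root_.map_mul]
  ring

lemma inner_conjVec (x y : EuclideanSpace ℂ (Fin Dn)) :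
    ⟪conjVec x, conjVec y⟫ = ⟪y, x⟫ := by
  simp only [PiLp.inner_apply, RCLike.inner_apply, conjVec_apply]
  refine Finset.sum_congr rfl fun d _ => ?_
  simp only [RCLike.star_def, RingHomCompTriple.comp_apply, RCLike.conj_conj]
  simp [mul_comm]

lemma toEuclideanLin_kron_tensorVec (A : Matrix (Fin Dn) (Fin Dn) ℂ)
    (B : Matrix (Fin rn) (Fin rn) ℂ) (x : EuclideanSpace ℂ (Fin Dn))
    (y : EuclideanSpace ℂ (Fin rn)) :
    Matrix.toEuclideanLin (A ⊗ₖ B) (tensorVec x y)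
      = tensorVec (Matrix.toEuclideanLin A x) (Matrix.toEuclideanLin B y) := by
  apply (WithLp.equiv 2 ((Fin Dn × Fin rn) → ℂ)).injective
  funext dk
  show ((A ⊗ₖ B) *ᵥ fun dk => x dk.1 * y dk.2) dk = (A *ᵥ x) dk.1 * (B *ᵥ y) dk.2
  simp only [Matrix.mulVec, dotProduct, Matrix.kroneckerMap_apply]
  rw [Finset.sum_mul_sum, Fintype.sum_prod_type]
  refine Finset.sum_congr rfl fun d _ => Finset.sum_congr rfl fun k _ => ?_
  ring

lemma toEuclideanLin_map_star_conjVec (A : Matrix (Fin Dn) (Fin Dn) ℂ)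
    (x : EuclideanSpace ℂ (Fin Dn)) :
    Matrix.toEuclideanLin (A.map star) (conjVec x) = conjVec (Matrix.toEuclideanLin A x) := by
  apply (WithLp.equiv 2 (Fin Dn → ℂ)).injective
  funext d
  show (A.map star *ᵥ fun e => star (x e)) d = star ((A *ᵥ x) d)
  simp [Matrix.mulVec, dotProduct, Matrix.map_apply, star_sum, star_mul', mul_comm]

end Kron

section Iso

variable {n m : Type*} [Fintype n] [Fintype m] [DecidableEq n] [DecidableEq m]

lemma euclid_inner_eq_dot (x y : EuclideanSpace ℂ n) :
    ⟪x, y⟫ = dotProduct (star ((WithLp.equiv 2 (n → ℂ)) x))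
      ((WithLp.equiv 2 (n → ℂ)) y) := by
  simp only [PiLp.inner_apply, RCLike.inner_apply, dotProduct, Pi.star_apply]
  exact Finset.sum_congr rfl fun _ _ => mul_comm _ _

lemma inner_toEuclideanLin (M : Matrix n n ℂ) (y z : EuclideanSpace ℂ n) :
    ⟪y, Matrix.toEuclideanLin M z⟫
      = dotProduct (star ((WithLp.equiv 2 (n → ℂ)) y))
        (M *ᵥ ((WithLp.equiv 2 (n → ℂ)) z)) := by
  rw [euclid_inner_eq_dot, Matrix.toEuclideanLin_apply, withLp_equiv_toLp_two]; rfl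

lemma inner_map_map (A : Matrix m n ℂ) (M : Matrix m m ℂ) (y z : EuclideanSpace ℂ n) :
    ⟪Matrix.toEuclideanLin A y, Matrix.toEuclideanLin M (Matrix.toEuclideanLin A z)⟫
      = ⟪y, Matrix.toEuclideanLin (Aᴴ * M * A) z⟫ := by
  rw [euclid_inner_eq_dot, euclid_inner_eq_dot]
  simp only [Matrix.toEuclideanLin_apply, withLp_equiv_toLp_two]
  rw [Matrix.star_mulVec, Matrix.mulVec_mulVec, dotProduct_mulVec,
    Matrix.vecMul_vecMul, dotProduct_mulVec, ← Matrix.mul_assoc]; rfl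

lemma inner_map_map' (A : Matrix m n ℂ) (y z : EuclideanSpace ℂ n) :
    ⟪Matrix.toEuclideanLin A y, Matrix.toEuclideanLin A z⟫
      = ⟪y, Matrix.toEuclideanLin (Aᴴ * A) z⟫ := by
  have h1 : Matrix.toEuclideanLin (1 : Matrix m m ℂ) ((Matrix.toEuclideanLin A) z)
      = (Matrix.toEuclideanLin A) z := by
    apply (WithLp.equiv 2 (m → ℂ)).injective
    rw [Matrix.toEuclideanLin_apply, withLp_equiv_toLp_two, Matrix.one_mulVec]; rfl
  have := inner_map_map A 1 y z
  rwa [Matrix.mul_one, h1] at this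

lemma toEuclideanLin_one : Matrix.toEuclideanLin (1 : Matrix n n ℂ) = LinearMap.id := by
  apply LinearMap.ext
  intro x
  apply (WithLp.equiv 2 (n → ℂ)).injective
  rw [Matrix.toEuclideanLin_apply, withLp_equiv_toLp_two, Matrix.one_mulVec]
  rfl

lemma toEuclideanLin_mul (A B : Matrix n n ℂ) (x : EuclideanSpace ℂ n) :
    Matrix.toEuclideanLin (A * B) x
      = Matrix.toEuclideanLin A (Matrix.toEuclideanLin B x) := by
  apply (WithLp.equiv 2 (n → ℂ)).injective
  exact (Matrix.mulVec_mulVec _ _ _).symm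

lemma norm_inner_toEuclideanLin_le (M : Matrix n n ℂ) (x : EuclideanSpace ℂ n) :
    ‖⟪x, Matrix.toEuclideanLin M x⟫‖ ≤ opNorm M * ‖x‖ ^ 2 := by
  have h1 := norm_inner_le_norm (𝕜 := ℂ) x (Matrix.toEuclideanLin M x)
  have h2 : ‖Matrix.toEuclideanLin M x‖ ≤ opNorm M * ‖x‖ := by
    exact (LinearMap.toContinuousLinearMap (Matrix.toEuclideanLin M)).le_opNorm x
  calc ‖⟪x, Matrix.toEuclideanLin M x⟫‖ ≤ ‖x‖ * ‖Matrix.toEuclideanLin M x‖ := h1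
    _ ≤ ‖x‖ * (opNorm M * ‖x‖) := by
        exact mul_le_mul_of_nonneg_left h2 (norm_nonneg x)
    _ = opNorm M * ‖x‖ ^ 2 := by ring

end Iso

section TensorSmul

variable {Dn rn : ℕ}

lemma tensorVec_smul_right (x : EuclideanSpace ℂ (Fin Dn)) (a : ℂ)
    (y : EuclideanSpace ℂ (Fin rn)) : tensorVec x (a • y) = a • tensorVec x y := by
  apply (WithLp.equiv 2 ((Fin Dn × Fin rn) → ℂ)).injective
  funext dk
  show x dk.1 * (a • y) dk.2 = (a • tensorVec x y) dk
  rw [PiLp.smul_apply, PiLp.smul_apply, smul_eq_mul, smul_eq_mul, tensorVec_apply]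
  ring

lemma tensorVec_smul_left (a : ℂ) (x : EuclideanSpace ℂ (Fin Dn))
    (y : EuclideanSpace ℂ (Fin rn)) : tensorVec (a • x) y = a • tensorVec x y := by
  apply (WithLp.equiv 2 ((Fin Dn × Fin rn) → ℂ)).injective
  funext dk
  show (a • x) dk.1 * y dk.2 = (a • tensorVec x y) dk
  rw [PiLp.smul_apply, PiLp.smul_apply, smul_eq_mul, smul_eq_mul, tensorVec_apply]
  ring

lemma conjVec_smul (a : ℂ) (x : EuclideanSpace ℂ (Fin Dn)) :
    conjVec (a • x) = (starRingEnd ℂ a) • conjVec x := by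
  apply (WithLp.equiv 2 (Fin Dn → ℂ)).injective
  funext d
  show star ((a • x) d) = ((starRingEnd ℂ a) • conjVec x) d
  rw [PiLp.smul_apply, PiLp.smul_apply, smul_eq_mul, smul_eq_mul, conjVec_apply,
    star_mul']
  rfl

end TensorSmul

set_option maxHeartbeats 2000000 in
/-- If `Ṽ` is an isometry onto `S_{≤Δ}(H')` and
`‖H'|_{≤Δ} − Ṽ(H⊗P + H̄⊗Q)Ṽ†‖ ≤ ε` (where `Ṽ Ṽᴴ` is the orthogonal projector onto
`S_{≤Δ}(H')`), then the `j`-th smallest eigenvalue of `H'` is within `ε` of the `i`-th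
smallest eigenvalue of `H` for all `i·r ≤ j < (i+1)·r` (0-indexed; `r = p + q`). -/
theorem eigenvalue_comparison_of_simulation
    (D D' p q r : ℕ) (hrpq : r = p + q) (hr : 1 ≤ r)
    (H : Matrix (Fin D) (Fin D) ℂ) (hH : H.IsHermitian)
    (H' : Matrix (Fin D') (Fin D') ℂ) (hH' : H'.IsHermitian)
    (P Q : Matrix (Fin r) (Fin r) ℂ)
    (hPherm : P.IsHermitian) (hPproj : P * P = P)
    (hQherm : Q.IsHermitian) (hQproj : Q * Q = Q)
    (hPQ : P * Q = 0) (hPQone : P + Q = 1)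
    (hrankP : P.rank = p) (hrankQ : Q.rank = q)
    (Δ ε : ℝ) (hΔ : 0 ≤ Δ) (hε : 0 ≤ ε)
    (Vt : Matrix (Fin D') (Fin D × Fin r) ℂ)
    (hVt_iso : Vtᴴ * Vt = 1)
    (hVt_range : LinearMap.range (Matrix.toEuclideanLin Vt) = lowEnergy H' Δ)
    (hclose : opNorm ((Vt * Vtᴴ) * H' * (Vt * Vtᴴ)
        - Vt * (H ⊗ₖ P + (H.map star) ⊗ₖ Q) * Vtᴴ) ≤ ε)
    (i j : ℕ) (hi : i < D) (hj : j < D')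
    (hjlo : i * r ≤ j) (hjhi : j < (i + 1) * r) :
    |(sortedEigs hH).getD i 0 - (sortedEigs hH').getD j 0| ≤ ε := by
  classical
  set A : Matrix (Fin D × Fin r) (Fin D × Fin r) ℂ := H ⊗ₖ P + (H.map star) ⊗ₖ Q with hA
  set V := Matrix.toEuclideanLin Vt with hV
  set TA := Matrix.toEuclideanLin A with hTA
  set TH' := Matrix.toEuclideanLin H' with hTH'def
  set b := hH.eigenvectorBasis with hb
  set σ := Tuple.sort hH.eigenvalues with hσ
  set lam : Fin D → ℝ := fun m => hH.eigenvalues (σ m) with hlam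
  have hlam_mono : Monotone lam :=
    show Monotone (hH.eigenvalues ∘ ⇑σ) from Tuple.monotone_sort _
  set b' := hH'.eigenvectorBasis with hb'
  set lam' : Fin D' → ℝ := fun m => hH'.eigenvalues (Tuple.sort hH'.eigenvalues m) with hlam'
  set c := hPherm.eigenvectorBasis with hc
  set e := hPherm.eigenvalues with he
  have hT' : ∀ k, TH' (b' k) = ((hH'.eigenvalues k : ℝ) : ℂ) • b' k :=
    fun k => toEuclideanLin_eigenvectorBasis hH' k
  have hPe : ∀ k, Matrix.toEuclideanLin P (c k) = ((e k : ℝ) : ℂ) • c k :=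
    fun k => toEuclideanLin_eigenvectorBasis hPherm k
  have hQeq : Q = 1 - P := eq_sub_of_add_eq' hPQone
  have hQe : ∀ k, Matrix.toEuclideanLin Q (c k) = ((1 - e k : ℝ) : ℂ) • c k := by
    intro k
    rw [hQeq, map_sub, LinearMap.sub_apply, toEuclideanLin_one, LinearMap.id_apply, hPe k]
    push_cast
    rw [sub_smul, one_smul]
  have he01 : ∀ k, e k = 0 ∨ e k = 1 := by
    intro k
    have h2 : Matrix.toEuclideanLin (P * P) (c k) = Matrix.toEuclideanLin P (c k) := by
      rw [hPproj]
    rw [toEuclideanLin_mul, hPe, LinearMap.map_smul, hPe, smul_smul] at h2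
    have hc0 : c k ≠ 0 := hPherm.eigenvectorBasis.orthonormal.ne_zero k
    have h3 : (((e k : ℝ) : ℂ) * (e k : ℝ) - ((e k : ℝ) : ℂ)) • c k = 0 := by
      rw [sub_smul, h2, sub_self]
    have h4 : ((e k : ℝ) : ℂ) * (e k : ℝ) - ((e k : ℝ) : ℂ) = 0 := by
      rcases smul_eq_zero.mp h3 with h | h
      · exact h
      · exact absurd h hc0
    have h5 : e k * e k - e k = 0 := by exact_mod_cast h4
    have h6 : e k * (e k - 1) = 0 := by linear_combination h5
    rcases mul_eq_zero.mp h6 with h | h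
    · exact Or.inl h
    · exact Or.inr (by linarith)
  -- the eigenvector family of A
  set Psi : Fin D × Fin r → EuclideanSpace ℂ (Fin D × Fin r) := fun mk =>
    if e mk.2 = 1 then tensorVec (b (σ mk.1)) (c mk.2)
    else tensorVec (conjVec (b (σ mk.1))) (c mk.2) with hPsidef
  have hinner_bb : ∀ m m' : Fin D, ⟪b (σ m), b (σ m')⟫ = if m = m' then 1 else 0 := by
    intro m m'
    rw [orthonormal_iff_ite.mp hH.eigenvectorBasis.orthonormal]
    simp [EmbeddingLike.apply_eq_iff_eq]
  have hinner_cc : ∀ k k' : Fin r, ⟪c k, c k'⟫ = if k = k' then 1 else 0 :=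
    fun k k' => orthonormal_iff_ite.mp hPherm.eigenvectorBasis.orthonormal k k'
  have hPsi_fact : ∀ (m : Fin D) (k : Fin r), Psi (m, k)
      = tensorVec (if e k = 1 then b (σ m) else conjVec (b (σ m))) (c k) := by
    intro m k
    by_cases hek : e k = 1 <;> simp [hPsidef, hek]
  have hPsi_on : Orthonormal ℂ Psi := by
    rw [orthonormal_iff_ite]
    rintro ⟨m, k⟩ ⟨m', k'⟩
    by_cases hkk : k = k'
    · subst hkk
      by_cases hek : e k = 1
      · simp only [hPsidef, if_pos hek, inner_tensorVec, hinner_bb, hinner_cc, if_pos rfl,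
          mul_one]
        simp [Prod.ext_iff]
      · simp only [hPsidef, if_neg hek, inner_tensorVec, inner_conjVec, hinner_bb,
          hinner_cc, if_pos rfl, mul_one]
        simp [Prod.ext_iff, eq_comm]
    · have hc0 : ⟪c k, c k'⟫ = 0 := by rw [hinner_cc]; simp [hkk]
      have hz : ⟪Psi (m, k), Psi (m', k')⟫ = 0 := by
        rw [hPsi_fact, hPsi_fact, inner_tensorVec, hc0, mul_zero]
      rw [hz]
      simp [Prod.ext_iff, hkk]
  have hHb : ∀ m : Fin D, Matrix.toEuclideanLin H (b (σ m)) = ((lam m : ℝ) : ℂ) • b (σ m) :=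
    fun m => toEuclideanLin_eigenvectorBasis hH (σ m)
  have hHbar : ∀ m : Fin D, Matrix.toEuclideanLin (H.map star) (conjVec (b (σ m)))
      = ((lam m : ℝ) : ℂ) • conjVec (b (σ m)) := by
    intro m
    rw [toEuclideanLin_map_star_conjVec, hHb m, conjVec_smul]
    congr 1
    exact Complex.conj_ofReal _
  have hPsi_eig : ∀ mk : Fin D × Fin r, TA (Psi mk) = ((lam mk.1 : ℝ) : ℂ) • Psi mk := by
    rintro ⟨m, k⟩
    have hTA_apply : TA (Psi (m, k)) = Matrix.toEuclideanLin (H ⊗ₖ P) (Psi (m, k))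
        + Matrix.toEuclideanLin ((H.map star) ⊗ₖ Q) (Psi (m, k)) := by
      rw [hTA, hA, map_add, LinearMap.add_apply]
    rcases he01 k with hek | hek
    · have hk1 : ¬ (e k = 1) := by rw [hek]; norm_num
      simp only [hPsidef, if_neg hk1] at *
      rw [hTA_apply, toEuclideanLin_kron_tensorVec, toEuclideanLin_kron_tensorVec,
        hPe k, hQe k, hek, hHbar m]
      push_cast
      rw [tensorVec_smul_right, tensorVec_smul_right, tensorVec_smul_left]
      simp
    · simp only [hPsidef, if_pos hek] at *
      rw [hTA_apply, toEuclideanLin_kron_tensorVec, toEuclideanLin_kron_tensorVec,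
        hPe k, hQe k, hek, hHb m]
      push_cast
      rw [tensorVec_smul_right, tensorVec_smul_right, tensorVec_smul_left]
      simp
  haveI hne : Nonempty (Fin D × Fin r) := ⟨(⟨i, hi⟩, ⟨0, hr⟩)⟩
  have hcard : Fintype.card (Fin D × Fin r)
      = Module.finrank ℂ (EuclideanSpace ℂ (Fin D × Fin r)) := by
    simp [finrank_euclideanSpace]
  set PsiB : OrthonormalBasis (Fin D × Fin r) ℂ (EuclideanSpace ℂ (Fin D × Fin r)) :=
    OrthonormalBasis.mk hPsi_on
      (hPsi_on.linearIndependent.span_eq_top_of_card_eq_finrank hcard).ge with hPsiBdef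
  have hPsiB_coe : ⇑PsiB = Psi := OrthonormalBasis.coe_mk _ _
  -- isometry facts
  have hVinn : ∀ y z : EuclideanSpace ℂ (Fin D × Fin r), ⟪V y, V z⟫ = ⟪y, z⟫ := by
    intro y z
    rw [hV, inner_map_map', hVt_iso, toEuclideanLin_one, LinearMap.id_apply]
  have hVnorm : ∀ y : EuclideanSpace ℂ (Fin D × Fin r), ‖V y‖ ^ 2 = ‖y‖ ^ 2 := by
    intro y
    have h := congrArg RCLike.re (hVinn y y)
    rwa [inner_self_eq_norm_sq, inner_self_eq_norm_sq] at h
  have hVinj : Function.Injective V := by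
    intro y z hyz
    have h1 : ‖y - z‖ ^ 2 = ‖V (y - z)‖ ^ 2 := (hVnorm _).symm
    rw [map_sub, hyz, sub_self, norm_zero] at h1
    have h2 : ‖y - z‖ = 0 := by nlinarith [norm_nonneg (y - z)]
    exact sub_eq_zero.mp (norm_eq_zero.mp h2)
  -- closeness
  set Emat := (Vt * Vtᴴ) * H' * (Vt * Vtᴴ) - Vt * A * Vtᴴ with hEmatdef
  have hsand : ∀ X : Matrix (Fin D × Fin r) (Fin D × Fin r) ℂ, Vtᴴ * (Vt * X) = X := by
    intro X; rw [← Matrix.mul_assoc, hVt_iso, Matrix.one_mul]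
  have hkey : Vtᴴ * Emat * Vt = Vtᴴ * H' * Vt - A := by
    simp only [hEmatdef, Matrix.mul_sub, Matrix.sub_mul, Matrix.mul_assoc, hVt_iso,
      Matrix.mul_one, hsand]
  have hclose' : ∀ y : EuclideanSpace ℂ (Fin D × Fin r),
      |RCLike.re ⟪V y, TH' (V y)⟫ - RCLike.re ⟪y, TA y⟫| ≤ ε * ‖y‖ ^ 2 := by
    intro y
    have h1 : ⟪V y, Matrix.toEuclideanLin Emat (V y)⟫
        = ⟪V y, TH' (V y)⟫ - ⟪y, TA y⟫ := by
      rw [hV, inner_map_map, hkey, map_sub, LinearMap.sub_apply, inner_sub_right]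
      congr 1
      rw [← inner_map_map]
    have h2 : ‖⟪V y, Matrix.toEuclideanLin Emat (V y)⟫‖ ≤ ε * ‖y‖ ^ 2 := by
      calc ‖⟪V y, Matrix.toEuclideanLin Emat (V y)⟫‖
          ≤ opNorm Emat * ‖V y‖ ^ 2 := norm_inner_toEuclideanLin_le Emat (V y)
        _ ≤ ε * ‖V y‖ ^ 2 := mul_le_mul_of_nonneg_right hclose (by positivity)
        _ = ε * ‖y‖ ^ 2 := by rw [hVnorm]
    have h3 : RCLike.re ⟪V y, TH' (V y)⟫ - RCLike.re ⟪y, TA y⟫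
        = RCLike.re ⟪V y, Matrix.toEuclideanLin Emat (V y)⟫ := by rw [h1, map_sub]
    rw [h3]
    exact (RCLike.abs_re_le_norm _).trans h2
  -- the low-energy subspace
  set sLow := lowSet hH' Δ with hsLowdef
  set Tspan := Submodule.span ℂ (⇑b' '' ↑sLow) with hTspandef
  have hrange : LinearMap.range V = Tspan := by
    rw [hV, hVt_range, lowEnergy_eq_span hH' Δ]
  have hVmem : ∀ y, V y ∈ Tspan := fun y => hrange ▸ LinearMap.mem_range_self V y
  have hTdim : Module.finrank ℂ Tspan = D * r := by
    rw [← hrange, LinearMap.finrank_range_of_inj hVinj, finrank_euclideanSpace]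
    simp
  have hTorth := Submodule.finrank_add_finrank_orthogonal Tspan
  rw [hTdim, finrank_euclideanSpace_fin] at hTorth
  have hDrD' : D * r ≤ D' := by
    have h := Submodule.finrank_le Tspan
    rw [hTdim, finrank_euclideanSpace_fin] at h
    exact h
  set i' : Fin D := ⟨i, hi⟩ with hi'def
  set j' : Fin D' := ⟨j, hj⟩ with hj'def
  have hPsi_norm : ∀ mk, ‖Psi mk‖ = 1 := fun mk => hPsi_on.1 mk
  have hform_T : ∀ x ∈ Tspan, RCLike.re ⟪x, TH' x⟫ ≤ Δ * ‖x‖ ^ 2 := by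
    intro x hx
    exact form_le_of_mem_span b' TH' hH'.eigenvalues hT' sLow Δ
      (fun k hk => (mem_lowSet_iff hH' Δ k).mp hk) hx
  -- form bounds on spans of Psi
  have hPsi_le : ∀ (s : Finset (Fin D × Fin r)) (t : ℝ), (∀ mk ∈ s, lam mk.1 ≤ t) →
      ∀ x ∈ Submodule.span ℂ (Psi '' ↑s), RCLike.re ⟪x, TA x⟫ ≤ t * ‖x‖ ^ 2 := by
    intro s t hs x hx
    refine form_le_of_mem_span PsiB TA (fun mk => lam mk.1) ?_ s t hs ?_
    · intro mk; rw [hPsiB_coe]; exact hPsi_eig mk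
    · rwa [hPsiB_coe]
  have hPsi_ge : ∀ (s : Finset (Fin D × Fin r)) (t : ℝ), (∀ mk ∈ s, t ≤ lam mk.1) →
      ∀ x ∈ Submodule.span ℂ (Psi '' ↑s), t * ‖x‖ ^ 2 ≤ RCLike.re ⟪x, TA x⟫ := by
    intro s t hs x hx
    refine form_ge_of_mem_span PsiB TA (fun mk => lam mk.1) ?_ s t hs ?_
    · intro mk; rw [hPsiB_coe]; exact hPsi_eig mk
    · rwa [hPsiB_coe]
  -- Δ is at least lam i' - ε
  have hk0 : (0 : ℕ) < r := hr
  set k0 : Fin r := ⟨0, hk0⟩ with hk0def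
  have hDelta : lam i' - ε ≤ Δ := by
    set y0 := Psi (i', k0) with hy0def
    have hy0norm : ‖y0‖ = 1 := hPsi_norm _
    have hAy0 : RCLike.re ⟪y0, TA y0⟫ = lam i' := by
      rw [hy0def, hPsi_eig (i', k0), inner_smul_right, inner_self_eq_norm_sq_to_K]
      rw [← hy0def, hy0norm]
      simp
    have hcb := hclose' y0
    rw [abs_le] at hcb
    have hTb := hform_T (V y0) (hVmem y0)
    have hVy0 : ‖V y0‖ ^ 2 = 1 := by rw [hVnorm, hy0norm]; norm_num
    rw [hVy0] at hTb
    rw [hy0norm] at hcb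
    have := hcb.1
    nlinarith [hTb, hAy0]
  -- Part (a)
  have ha : lam' j' ≤ lam i' + ε := by
    set sa : Finset (Fin D × Fin r) := Finset.Iic i' ×ˢ Finset.univ with hsadef
    set W0 := Submodule.span ℂ (Psi '' ↑sa) with hW0def
    have hW0dim : Module.finrank ℂ W0 = (i + 1) * r := by
      rw [hW0def, ← hPsiB_coe, finrank_span_orthonormal PsiB.orthonormal,
        Finset.card_product]
      simp [Fin.card_Iic, hi'def]
    set W := Submodule.map V W0 with hWdef
    have hWrange : W = LinearMap.range (V ∘ₗ W0.subtype) := by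
      rw [LinearMap.range_comp, Submodule.range_subtype]
    have hWdim : Module.finrank ℂ W = (i + 1) * r := by
      rw [hWrange, LinearMap.finrank_range_of_inj, hW0dim]
      rw [LinearMap.coe_comp]
      exact hVinj.comp Subtype.val_injective
    have hres := smallEig_le_of_subspace hH' j' (lam i' + ε) W ?_ ?_
    · exact hres
    · rw [hWdim]
      show j + 1 ≤ (i + 1) * r
      omega
    · intro x hx
      rw [hWdef, Submodule.mem_map] at hx
      obtain ⟨y, hy, rfl⟩ := hx
      have h1 : RCLike.re ⟪y, TA y⟫ ≤ lam i' * ‖y‖ ^ 2 := by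
        refine hPsi_le sa (lam i') ?_ y hy
        intro mk hmk
        exact hlam_mono (Finset.mem_Iic.mp (Finset.mem_product.mp hmk).1)
      have h2 := (abs_le.mp (hclose' y)).2
      have h3 : ‖V y‖ ^ 2 = ‖y‖ ^ 2 := hVnorm y
      show RCLike.re ⟪V y, TH' (V y)⟫ ≤ (lam i' + ε) * ‖V y‖ ^ 2
      rw [h3]
      nlinarith [h1, h2]
  -- Part (b)
  have hb2 : lam i' - ε ≤ lam' j' := by
    set sb : Finset (Fin D × Fin r) := Finset.Ici i' ×ˢ Finset.univ with hsbdef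
    set W0 := Submodule.span ℂ (Psi '' ↑sb) with hW0def
    have hW0dim : Module.finrank ℂ W0 = (D - i) * r := by
      rw [hW0def, ← hPsiB_coe, finrank_span_orthonormal PsiB.orthonormal,
        Finset.card_product]
      simp [Fin.card_Ici, hi'def]
    set W' := Submodule.map V W0 with hW'def
    have hW'range : W' = LinearMap.range (V ∘ₗ W0.subtype) := by
      rw [LinearMap.range_comp, Submodule.range_subtype]
    have hW'dim : Module.finrank ℂ W' = (D - i) * r := by
      rw [hW'range, LinearMap.finrank_range_of_inj, hW0dim]
      rw [LinearMap.coe_comp]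
      exact hVinj.comp Subtype.val_injective
    have hW'T : W' ≤ Tspan := by
      intro x hx
      rw [hW'def, Submodule.mem_map] at hx
      obtain ⟨y, _, rfl⟩ := hx
      exact hVmem y
    set U := W' ⊔ Tspanᗮ with hUdef
    have hinf : W' ⊓ Tspanᗮ = ⊥ := by
      rw [eq_bot_iff]
      intro x hx
      have h1 : x ∈ Tspan := hW'T hx.1
      have h2 := ((Submodule.mem_orthogonal _ _).mp hx.2) x h1
      rw [Submodule.mem_bot]
      exact inner_self_eq_zero.mp h2
    have hUdim : Module.finrank ℂ U
        = (D - i) * r + Module.finrank ℂ (Tspanᗮ) := by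
      have h := Submodule.finrank_sup_add_finrank_inf_eq W' Tspanᗮ
      rw [hinf, finrank_bot, add_zero, hW'dim] at h
      rw [hUdef, h]
    have hres := le_smallEig_of_subspace hH' j' (lam i' - ε) U ?_ ?_
    · exact hres
    · rw [hUdim]
      show D' - j ≤ (D - i) * r + Module.finrank ℂ (Tspanᗮ)
      have harith : (D - i) * r + i * r = D * r := by
        rw [← add_mul]
        congr 1
        omega
      omega
    · intro x hx
      rw [hUdef, Submodule.mem_sup] at hx
      obtain ⟨w, hw, z, hz, rfl⟩ := hx
      rw [hW'def, Submodule.mem_map] at hw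
      obtain ⟨y, hy, rfl⟩ := hw
      have hyA : lam i' * ‖y‖ ^ 2 ≤ RCLike.re ⟪y, TA y⟫ := by
        refine hPsi_ge sb (lam i') ?_ y hy
        intro mk hmk
        exact hlam_mono (Finset.mem_Ici.mp (Finset.mem_product.mp hmk).1)
      have h2 := (abs_le.mp (hclose' y)).1
      have hzspan : z ∈ Submodule.span ℂ (⇑b' '' ↑(sLowᶜ)) := by
        rw [← lowSpan_orthogonal hH' Δ]
        exact hz
      have hzform : Δ * ‖z‖ ^ 2 ≤ RCLike.re ⟪z, TH' z⟫ := by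
        refine form_ge_of_mem_span b' TH' hH'.eigenvalues hT' (sLowᶜ) Δ ?_ hzspan
        intro k hk
        rw [Finset.mem_compl, mem_lowSet_iff] at hk
        linarith [lt_of_not_ge hk]
      have hTz : TH' z ∈ Tspanᗮ := by
        rw [hTspandef, lowSpan_orthogonal hH' Δ]
        rw [← hsLowdef]
        exact span_eigen_invariant hH' (sLowᶜ) hzspan
      have hTw : TH' (V y) ∈ Tspan := span_eigen_invariant hH' sLow (hVmem y)
      have hcross1 : ⟪V y, TH' z⟫ = 0 :=
        ((Submodule.mem_orthogonal _ _).mp hTz) (V y) (hVmem y)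
      have hcross2 : ⟪z, TH' (V y)⟫ = 0 := by
        have h := ((Submodule.mem_orthogonal _ _).mp hz) (TH' (V y)) hTw
        rw [← inner_conj_symm, h, map_zero]
      have hwz : ⟪V y, z⟫ = 0 := ((Submodule.mem_orthogonal _ _).mp hz) (V y) (hVmem y)
      have hnorm : ‖V y + z‖ ^ 2 = ‖V y‖ ^ 2 + ‖z‖ ^ 2 := by
        rw [norm_add_sq (𝕜 := ℂ), hwz]
        simp
      have hformsum : RCLike.re ⟪V y + z, TH' (V y + z)⟫
          = RCLike.re ⟪V y, TH' (V y)⟫ + RCLike.re ⟪z, TH' z⟫ := by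
        rw [map_add, inner_add_left, inner_add_right, inner_add_right, hcross1, hcross2]
        rw [add_zero, zero_add, map_add]
      have hzscaled : (lam i' - ε) * ‖z‖ ^ 2 ≤ RCLike.re ⟪z, TH' z⟫ :=
        le_trans (mul_le_mul_of_nonneg_right hDelta (by positivity)) hzform
      have hVybound : (lam i' - ε) * ‖V y‖ ^ 2 ≤ RCLike.re ⟪V y, TH' (V y)⟫ := by
        have h3 : ‖V y‖ ^ 2 = ‖y‖ ^ 2 := hVnorm y
        rw [h3]
        nlinarith [hyA, h2]
      show (lam i' - ε) * ‖V y + z‖ ^ 2 ≤ RCLike.re ⟪V y + z, TH' (V y + z)⟫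
      rw [hnorm, hformsum, mul_add]
      exact add_le_add hVybound hzscaled
  -- conclusion
  rw [sortedEigs_getD hH i hi, sortedEigs_getD hH' j hj]
  rw [abs_le]
  constructor
  · linarith [hb2]
  · linarith [ha]
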